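/- The complex N^• = [N^{n+1} → N^n → ⋯ → N^1 → N^0] with differentials ∂ (and ∂̂f := Σ_{s∈{±}^n} (−1)^{s_1+⋯+s_n} f_{s_1…s_n} in the last step) is exact: the maps H (and (Ĥf)_{s_1…s_n} := (−1)^{s_1+⋯+s_n} P_1^{s_1}⋯P_n^{s_n} f) form a contracting homotopy in the category of k-vector spaces. In particular, ∂H + ĤP∂̂ = 1 on N^1 and ∂̂Ĥ = 1 on N^0. -/

import Mathlib

/-!
STATEMENT 12: The complex `N^• = [N^{n+1} → … → N^1 → N^0]` with differentials
`∂` (and `∂̂ f = ∑_{s∈{±}^n} (−1)^{s₁+⋯+s_n} f_{s₁…s_n}` in the last step) is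
an exact complex: the maps `H` and `(Ĥ a)_{s₁…s_n} = (−1)^{s₁+⋯+s_n}
P₁^{s₁}⋯P_n^{s_n} a` form a contracting homotopy in the category of `k`-vector
spaces.  In particular `∂H + Ĥ∂̂ = 1` on `N^1` and `∂̂Ĥ = 1` on `N^0 = A`.

The components of elements of `N^p` are indexed by the tuples `s ∈ {+,−,0}^n`
of degree `deg s = 1 + #{i : s_i = 0} = p`.
-/

open scoped Classical

abbrev Fam (n : ℕ) (A : Type*) := (Fin n → SignType) → A

noncomputable def zcount {n : ℕ} (s : Fin n → SignType) (i : Fin n) : ℕ :=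
  (Finset.univ.filter fun j => i < j ∧ s j = 0).card

/-- `deg(s₁,…,s_n) = 1 + #{i : s_i = 0}`. -/
noncomputable def degS {n : ℕ} (s : Fin n → SignType) : ℕ :=
  1 + (Finset.univ.filter fun i => s i = 0).card

noncomputable def bd {n : ℕ} {A : Type*} [Ring A] (i : Fin n) (f : Fam n A) : Fam n A :=
  fun s => if s i = 0 then 0
    else ((-1 : ℤ) ^ zcount s i) • f (Function.update s i 0)

noncomputable def bigD {n : ℕ} {A : Type*} [Ring A] (f : Fam n A) : Fam n A :=
  fun s => ∑ i : Fin n, bd i f s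

noncomputable def Psgn {n : ℕ} {A : Type*} [Ring A] (P : Fin n → A) (i : Fin n) :
    SignType → A
  | SignType.pos => P i
  | SignType.neg => 1 - P i
  | SignType.zero => 0

noncomputable def eps {n : ℕ} {A : Type*} [Ring A] (P : Fin n → A) (i : Fin n)
    (f : Fam n A) : Fam n A :=
  fun s => if s i = 0 then 0
    else ((s i : ℤ)) • (Psgn P i (s i) *
      ((1 : ℤ) • f (Function.update s i 1) + (-1 : ℤ) • f (Function.update s i (-1))))

noncomputable def hmt {n : ℕ} {A : Type*} [Ring A] (P : Fin n → A) (i : Fin n)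
    (f : Fam n A) : Fam n A :=
  fun s => if s i = 0 then
      ((-1 : ℤ) ^ zcount s i) •
        ((1 - P i) * f (Function.update s i 1) + P i * f (Function.update s i (-1)))
    else 0

noncomputable def epsUpTo {n : ℕ} {A : Type*} [Ring A] (P : Fin n → A) :
    ℕ → Fam n A → Fam n A
  | 0 => id
  | (m+1) => fun f => if h : m < n then epsUpTo P m (eps P ⟨m, h⟩ f) else epsUpTo P m f

noncomputable def bigH {n : ℕ} {A : Type*} [Ring A] (P : Fin n → A) (f : Fam n A) :
    Fam n A :=
  fun s => ∑ i : Fin n, epsUpTo P (i : ℕ) (hmt P i f) s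

/-- `∂̂ : N^1 → N^0 = A`, `f ↦ ∑_{s∈{±}^n} (−1)^{s₁+⋯+s_n} f_s`. -/
noncomputable def dHat {n : ℕ} {A : Type*} [Ring A] (f : Fam n A) : A :=
  ∑ γ : Fin n → Bool,
    (∏ j, (if γ j then (1 : ℤ) else -1)) • f (fun j => if γ j then 1 else -1)

/-- `Ĥ : N^0 = A → N^1`, `(Ĥ a)_{s₁…s_n} = (−1)^{s₁+⋯+s_n} P₁^{s₁}⋯P_n^{s_n} a`
(supported on the tuples with all `s_i ∈ {±}`). -/
noncomputable def hHat {n : ℕ} {A : Type*} [Ring A] (P : Fin n → A) (a : A) : Fam n A :=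
  fun s => if ∀ j, s j ≠ 0 then
      (∏ j, ((s j : ℤ))) •
        (((List.finRange n).map (fun j => Psgn P j (s j))).prod * a)
    else 0

section Aux
variable {n : ℕ} {A : Type*} [Ring A]

lemma zcount_update_of_not_lt (s : Fin n → SignType) {i j : Fin n} (h : ¬ i < j)
    (σ : SignType) : zcount (Function.update s j σ) i = zcount s i := by
  unfold zcount
  congr 1
  apply Finset.filter_congr
  intro k _
  by_cases hk : k = j
  · subst hk; simp [h]
  · simp [Function.update_of_ne hk]

lemma zcount_update_congr {s : Fin n → SignType} {j : Fin n} {σ : SignType}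
    (h : (σ = 0) ↔ (s j = 0)) (i : Fin n) :
    zcount (Function.update s j σ) i = zcount s i := by
  unfold zcount
  congr 1
  apply Finset.filter_congr
  intro k _
  by_cases hk : k = j
  · subst hk; simp [h]
  · simp [Function.update_of_ne hk]

lemma zcount_update_zero {s : Fin n → SignType} {i j : Fin n} (hij : i < j)
    (hj : s j ≠ 0) : zcount (Function.update s j 0) i = zcount s i + 1 := by
  have hset : (Finset.univ.filter fun k => i < k ∧ Function.update s j 0 k = 0)
      = insert j (Finset.univ.filter fun k => i < k ∧ s k = 0) := by
    ext k
    by_cases hk : k = j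
    · subst hk; simp [hij]
    · simp [Function.update_of_ne hk, hk]
  rw [zcount, zcount, hset, Finset.card_insert_of_notMem]
  simp [hj]

lemma zcount_update_ne_zero {s : Fin n → SignType} {i j : Fin n} (hij : i < j)
    (hj : s j = 0) {σ : SignType} (hσ : σ ≠ 0) :
    zcount s i = zcount (Function.update s j σ) i + 1 := by
  have h2 : Function.update (Function.update s j σ) j 0 = s := by
    rw [Function.update_idem, ← hj, Function.update_eq_self]
  have := zcount_update_zero (s := Function.update s j σ) hij (by simpa using hσ)
  rw [h2] at this
  exact this

end Aux
section Aux2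
variable {n : ℕ} {A : Type*} [Ring A] (P : Fin n → A)

lemma bd_sum {ι : Type*} (i : Fin n) (t : Finset ι) (g : ι → Fam n A) :
    bd i (fun s => ∑ x ∈ t, g x s) = fun s => ∑ x ∈ t, bd i (g x) s := by
  funext s
  by_cases h : s i = 0 <;> simp [bd, h, Finset.smul_sum]

lemma hmt_sum {ι : Type*} (i : Fin n) (t : Finset ι) (g : ι → Fam n A) :
    hmt P i (fun s => ∑ x ∈ t, g x s) = fun s => ∑ x ∈ t, hmt P i (g x) s := by
  funext s
  by_cases h : s i = 0
  · simp [hmt, h, Finset.mul_sum, Finset.smul_sum, Finset.sum_add_distrib]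
  · simp [hmt, h]

lemma eps_add (i : Fin n) (f g : Fam n A) :
    eps P i (f + g) = eps P i f + eps P i g := by
  funext s
  by_cases h : s i = 0
  · simp [eps, h]
  · simp only [eps, h, if_neg, Pi.add_apply, if_false, smul_add, mul_add]
    module

lemma eps_zero (i : Fin n) : eps P i (0 : Fam n A) = 0 := by
  funext s
  by_cases h : s i = 0 <;> simp [eps, h]

lemma epsUpTo_add (m : ℕ) (f g : Fam n A) :
    epsUpTo P m (f + g) = epsUpTo P m f + epsUpTo P m g := by
  induction m generalizing f g with
  | zero => rfl
  | succ m ih =>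
      simp only [epsUpTo]
      split
      · rw [eps_add, ih]
      · exact ih f g

lemma epsUpTo_zero (m : ℕ) : epsUpTo P m (0 : Fam n A) = 0 := by
  induction m with
  | zero => rfl
  | succ m ih =>
      simp only [epsUpTo]
      split
      · rw [eps_zero, ih]
      · exact ih

lemma epsUpTo_neg (m : ℕ) (f : Fam n A) :
    epsUpTo P m (-f) = - epsUpTo P m f := by
  have h := epsUpTo_add P m f (-f)
  rw [add_neg_cancel, epsUpTo_zero] at h
  exact (neg_eq_of_add_eq_zero_right h.symm).symm

lemma epsUpTo_sub (m : ℕ) (f g : Fam n A) :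
    epsUpTo P m (f - g) = epsUpTo P m f - epsUpTo P m g := by
  rw [sub_eq_add_neg, epsUpTo_add, epsUpTo_neg, sub_eq_add_neg]

lemma epsUpTo_sum {ι : Type*} (m : ℕ) (t : Finset ι) (g : ι → Fam n A) :
    epsUpTo P m (fun s => ∑ x ∈ t, g x s) = fun s => ∑ x ∈ t, epsUpTo P m (g x) s := by
  classical
  induction t using Finset.induction with
  | empty => simp only [Finset.sum_empty]; exact epsUpTo_zero P m
  | @insert a t ha ih =>
      have : (fun s => ∑ x ∈ insert a t, g x s) = g a + fun s => ∑ x ∈ t, g x s := by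
        funext s; simp [Finset.sum_insert ha]
      rw [this, epsUpTo_add, ih]
      funext s
      simp [Finset.sum_insert ha]

end Aux2
section Aux3
variable {n : ℕ} {A : Type*} [Ring A] (P : Fin n → A)

lemma bd_bd_self (i : Fin n) (f : Fam n A) : bd i (bd i f) = 0 := by
  funext s
  by_cases h : s i = 0
  · simp [bd, h]
  · simp [bd, h]

lemma bd_bd_of_lt {i j : Fin n} (hij : i < j) (f : Fam n A) :
    bd i (bd j f) + bd j (bd i f) = 0 := by
  have hne : i ≠ j := ne_of_lt hij
  funext s
  simp only [Pi.add_apply, Pi.zero_apply]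
  by_cases hi : s i = 0
  · have h2 : (Function.update s j 0) i = 0 := by
      rw [Function.update_of_ne hne]; exact hi
    by_cases hj : s j = 0 <;> simp [bd, hi, hj, h2]
  · by_cases hj : s j = 0
    · have h2 : (Function.update s i 0) j = 0 := by
        rw [Function.update_of_ne hne.symm]; exact hj
      simp [bd, hi, hj, h2]
    · have h2 : (Function.update s i 0) j = s j := Function.update_of_ne hne.symm _ _
      have h3 : (Function.update s j 0) i = s i := Function.update_of_ne hne _ _
      simp only [bd, hi, hj, h2, h3, if_neg, if_false]
      rw [zcount_update_of_not_lt s (lt_asymm hij), zcount_update_zero hij hj,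
        Function.update_comm hne]
      rw [smul_smul, smul_smul, ← add_smul]
      have : ((-1 : ℤ) ^ zcount s i * (-1) ^ zcount s j
          + (-1) ^ zcount s j * (-1) ^ (zcount s i + 1)) = 0 := by ring
      rw [this, zero_smul]

lemma bd_bd_anti {i j : Fin n} (hij : i ≠ j) (f : Fam n A) :
    bd i (bd j f) + bd j (bd i f) = 0 := by
  rcases lt_or_gt_of_ne hij with h | h
  · exact bd_bd_of_lt h f
  · rw [add_comm]; exact bd_bd_of_lt h f

lemma bd_eps_self (i : Fin n) (f : Fam n A) : bd i (eps P i f) = 0 := by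
  funext s
  by_cases h : s i = 0 <;> simp [bd, eps, h]

lemma eps_bd_self (i : Fin n) (f : Fam n A) : eps P i (bd i f) = 0 := by
  funext s
  by_cases h : s i = 0
  · simp [eps, h]
  · have h1 : (Function.update s i 1) i = 1 := Function.update_self _ _ _
    have h2 : (Function.update s i (-1)) i = -1 := Function.update_self _ _ _
    simp only [eps, h, if_false, bd, h1, h2, Function.update_idem]
    norm_num
    rw [zcount_update_of_not_lt s (lt_irrefl i), zcount_update_of_not_lt s (lt_irrefl i)]
    simp [sub_self]

end Aux3
section Aux4
variable {n : ℕ} {A : Type*} [Ring A] (P : Fin n → A)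

lemma eps_apply_ne {i : Fin n} {s : Fin n → SignType} (hi : s i ≠ 0) (f : Fam n A) :
    eps P i f s = ((s i : ℤ)) • (Psgn P i (s i) *
      (f (Function.update s i 1) - f (Function.update s i (-1)))) := by
  simp only [eps]
  rw [if_neg hi]
  simp only [one_smul, neg_smul, ← sub_eq_add_neg]

lemma homotopy_self (i : Fin n) (f : Fam n A) :
    bd i (hmt P i f) + hmt P i (bd i f) = f - eps P i f := by
  funext s
  simp only [Pi.add_apply, Pi.sub_apply]
  by_cases hi : s i = 0
  · have hs1 : Function.update (Function.update s i 1) i 0 = s := by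
      rw [Function.update_idem, ← hi, Function.update_eq_self]
    have hs2 : Function.update (Function.update s i (-1)) i 0 = s := by
      rw [Function.update_idem, ← hi, Function.update_eq_self]
    have e0 : bd i (hmt P i f) s = 0 := by simp [bd, hi]
    have e1 : eps P i f s = 0 := by simp [eps, hi]
    have e2 : bd i f (Function.update s i 1) = ((-1:ℤ)^zcount s i) • f s := by
      simp only [bd, Function.update_self]
      rw [if_neg (by decide : ¬ (1:SignType) = 0), hs1,
        zcount_update_of_not_lt s (lt_irrefl i)]
    have e3 : bd i f (Function.update s i (-1)) = ((-1:ℤ)^zcount s i) • f s := by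
      simp only [bd, Function.update_self]
      rw [if_neg (by decide : ¬ (-1:SignType) = 0), hs2,
        zcount_update_of_not_lt s (lt_irrefl i)]
    rw [e0, e1, zero_add, sub_zero]
    simp only [hmt]
    rw [if_pos hi, e2, e3, mul_smul_comm, mul_smul_comm, ← smul_add, smul_smul,
      ← pow_add, Even.neg_one_pow ⟨zcount s i, rfl⟩, one_smul, ← add_mul,
      sub_add_cancel, one_mul]
  · have key : bd i (hmt P i f) s =
        (1 - P i) * f (Function.update s i 1) + P i * f (Function.update s i (-1)) := by
      simp only [bd, hmt, Function.update_self, Function.update_idem, if_true,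
        eq_self_iff_true]
      rw [if_neg hi, zcount_update_of_not_lt s (lt_irrefl i), smul_smul,
        ← pow_add, Even.neg_one_pow ⟨zcount s i, rfl⟩, one_smul]
    have hz : hmt P i (bd i f) s = 0 := by simp [hmt, hi]
    rw [key, hz, add_zero, eps_apply_ne P hi f]
    rcases h1 : s i with _ | _ | _
    · exact absurd h1 hi
    · have hupd : Function.update s i (-1) = s := by
        rw [show (-1 : SignType) = s i by rw [h1]; exact SignType.neg_eq_neg_one.symm,
          Function.update_eq_self]
      rw [hupd, show ((SignType.neg : SignType) : ℤ) = -1 by decide,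
        show Psgn P i SignType.neg = 1 - P i from rfl]
      simp only [neg_smul, one_smul]
      noncomm_ring
    · have hupd : Function.update s i 1 = s := by
        rw [show (1 : SignType) = s i by rw [h1]; exact SignType.pos_eq_one.symm,
          Function.update_eq_self]
      rw [hupd, show ((SignType.pos : SignType) : ℤ) = 1 by decide,
        show Psgn P i SignType.pos = P i from rfl]
      simp only [one_smul]
      noncomm_ring

end Aux4
section Aux5
variable {n : ℕ} {A : Type*} [Ring A] (P : Fin n → A)

lemma bd_apply_ne {j : Fin n} {s : Fin n → SignType} (hj : s j ≠ 0) (f : Fam n A) :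
    bd j f s = ((-1:ℤ)^zcount s j) • f (Function.update s j 0) := by
  simp only [bd]; rw [if_neg hj]

lemma bd_eps_comm {i j : Fin n} (hij : i ≠ j) (f : Fam n A) :
    bd j (eps P i f) = eps P i (bd j f) := by
  funext s
  by_cases hj : s j = 0
  · rw [show bd j (eps P i f) s = 0 by simp [bd, hj]]
    by_cases hi : s i = 0
    · simp [eps, hi]
    · rw [eps_apply_ne P hi]
      have z1 : bd j f (Function.update s i 1) = 0 := by
        simp [bd, Function.update_of_ne hij.symm, hj]
      have z2 : bd j f (Function.update s i (-1)) = 0 := by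
        simp [bd, Function.update_of_ne hij.symm, hj]
      simp [z1, z2]
  · have hti : (Function.update s j 0) i = s i := Function.update_of_ne hij _ _
    by_cases hi : s i = 0
    · rw [bd_apply_ne hj,
        show eps P i f (Function.update s j 0) = 0 by simp [eps, hti, hi],
        show eps P i (bd j f) s = 0 by simp [eps, hi], smul_zero]
    · have e1 : eps P i f (Function.update s j 0) = ((s i : ℤ)) •
          (Psgn P i (s i) * (f (Function.update (Function.update s j 0) i 1)
            - f (Function.update (Function.update s j 0) i (-1)))) := by
        rw [eps_apply_ne P (by rw [hti]; exact hi), hti]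
      have e2 : ∀ σ : SignType, σ ≠ 0 →
          bd j f (Function.update s i σ) = ((-1:ℤ)^zcount s j) •
            f (Function.update (Function.update s j 0) i σ) := by
        intro σ hσ
        rw [bd_apply_ne (by rw [Function.update_of_ne hij.symm]; exact hj),
          zcount_update_congr (iff_of_false hσ hi) j, Function.update_comm hij]
      rw [bd_apply_ne hj, e1, eps_apply_ne P hi,
        e2 1 (by decide), e2 (-1) (by decide), ← smul_sub, mul_smul_comm, smul_comm]

lemma bd_hmt_anti {i j : Fin n} (hij : i ≠ j) (f : Fam n A) :
    bd j (hmt P i f) + hmt P i (bd j f) = 0 := by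
  funext s
  simp only [Pi.add_apply, Pi.zero_apply]
  by_cases hi : s i = 0
  · by_cases hj : s j = 0
    · have z1 : ∀ σ : SignType, bd j f (Function.update s i σ) = 0 := by
        intro σ; simp [bd, Function.update_of_ne hij.symm, hj]
      rw [show bd j (hmt P i f) s = 0 by simp [bd, hj],
        show hmt P i (bd j f) s = 0 by simp [hmt, hi, z1], add_zero]
    · -- the interesting case
      have hti : (Function.update s j 0) i = 0 := by
        rw [Function.update_of_ne hij]; exact hi
      have e1 : bd j (hmt P i f) s = ((-1:ℤ)^zcount s j * (-1)^(zcount (Function.update s j 0) i)) •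
          ((1 - P i) * f (Function.update (Function.update s j 0) i 1)
            + P i * f (Function.update (Function.update s j 0) i (-1))) := by
        rw [bd_apply_ne hj, ← smul_smul]
        congr 1
        simp only [hmt]
        rw [if_pos hti]
      have e2 : ∀ σ : SignType, σ ≠ 0 →
          bd j f (Function.update s i σ) = ((-1:ℤ)^(zcount (Function.update s i σ) j)) •
            f (Function.update (Function.update s j 0) i σ) := by
        intro σ hσ
        rw [bd_apply_ne (by rw [Function.update_of_ne hij.symm]; exact hj),
          Function.update_comm hij]
      have e3 : hmt P i (bd j f) s = ((-1:ℤ)^zcount s i * (-1)^(zcount (Function.update s i 1) j)) •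
          ((1 - P i) * f (Function.update (Function.update s j 0) i 1)
            + P i * f (Function.update (Function.update s j 0) i (-1))) := by
        have hw : zcount (Function.update s i (-1)) j = zcount (Function.update s i 1) j := by
          rcases lt_or_gt_of_ne hij with h | h
          · rw [zcount_update_of_not_lt s (not_lt.2 (le_of_lt h)),
              zcount_update_of_not_lt s (not_lt.2 (le_of_lt h))]
          · have q1 := zcount_update_ne_zero h hi (by decide : (1:SignType) ≠ 0)
            have q2 := zcount_update_ne_zero h hi (by decide : (-1:SignType) ≠ 0)
            omega
        simp only [hmt]
        rw [if_pos hi, e2 1 (by decide), e2 (-1) (by decide), hw,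
          mul_smul_comm, mul_smul_comm, ← smul_add, smul_smul]
      rw [e1, e3, ← add_smul]
      rcases lt_or_gt_of_ne hij with h | h
      · rw [zcount_update_zero h hj, zcount_update_of_not_lt s (lt_asymm h)]
        have : ((-1:ℤ) ^ zcount s j * (-1) ^ (zcount s i + 1)
            + (-1) ^ zcount s i * (-1) ^ zcount s j) = 0 := by ring
        rw [this, zero_smul]
      · have q1 := zcount_update_ne_zero h hi (by decide : (1:SignType) ≠ 0)
        rw [zcount_update_of_not_lt s (lt_asymm h), q1]
        have : ((-1:ℤ) ^ (zcount (Function.update s i 1) j + 1) * (-1) ^ zcount s i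
            + (-1) ^ zcount s i * (-1) ^ zcount (Function.update s i 1) j) = 0 := by ring
        rw [this, zero_smul]
  · have z2 : hmt P i (bd j f) s = 0 := by simp [hmt, hi]
    by_cases hj : s j = 0
    · simp [bd, hj, z2]
    · have : hmt P i f (Function.update s j 0) = 0 := by
        simp [hmt, Function.update_of_ne hij, hi]
      rw [bd_apply_ne hj, this, smul_zero, z2, add_zero]

end Aux5
section Aux6
variable {n : ℕ} {A : Type*} [Ring A] (P : Fin n → A)

lemma bd_epsUpTo_comm (j : Fin n) (m : ℕ) (hm : m ≤ (j : ℕ)) (f : Fam n A) :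
    bd j (epsUpTo P m f) = epsUpTo P m (bd j f) := by
  induction m generalizing f with
  | zero => rfl
  | succ m ih =>
      simp only [epsUpTo]
      split
      · rename_i h
        have hne : (⟨m, h⟩ : Fin n) ≠ j := Fin.ne_of_val_ne (show m ≠ (j:ℕ) by omega)
        rw [ih (by omega), bd_eps_comm P hne]
      · exact ih (by omega) f

lemma bd_epsUpTo_zero (j : Fin n) (m : ℕ) (hm : (j : ℕ) < m) (f : Fam n A) :
    bd j (epsUpTo P m f) = 0 := by
  induction m generalizing f with
  | zero => omega
  | succ m ih =>
      simp only [epsUpTo]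
      split
      · rename_i h
        by_cases hjm : (j : ℕ) < m
        · exact ih hjm _
        · have hj : j = ⟨m, h⟩ := Fin.ext (show (j:ℕ) = m by omega)
          rw [bd_epsUpTo_comm P j m (by omega), hj, bd_eps_self, epsUpTo_zero]
      · rename_i h
        exact ih (by omega) f

lemma epsUpTo_bd_zero (j : Fin n) (m : ℕ) (hm : (j : ℕ) < m) (f : Fam n A) :
    epsUpTo P m (bd j f) = 0 := by
  induction m generalizing f with
  | zero => omega
  | succ m ih =>
      simp only [epsUpTo]
      split
      · rename_i h
        by_cases hjm : (j : ℕ) < m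
        · have hne : (⟨m, h⟩ : Fin n) ≠ j := Fin.ne_of_val_ne (show m ≠ (j:ℕ) by omega)
          rw [← bd_eps_comm P hne, ih hjm]
        · have hj : (⟨m, h⟩ : Fin n) = j := Fin.ext (show m = (j:ℕ) by omega)
          rw [hj, eps_bd_self, epsUpTo_zero]
      · rename_i h
        exact ih (by omega) f

lemma epsUpTo_succ_fin (i : Fin n) (f : Fam n A) :
    epsUpTo P ((i : ℕ) + 1) f = epsUpTo P (i : ℕ) (eps P i f) := by
  simp only [epsUpTo]
  rw [dif_pos i.isLt]

lemma master (f : Fam n A) :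
    bigD (bigH P f) + bigH P (bigD f) = f - epsUpTo P n f := by
  funext s
  have hD : ∀ j, bd j (bigH P f) s = ∑ i : Fin n, bd j (epsUpTo P (i:ℕ) (hmt P i f)) s := by
    intro j
    rw [show bigH P f = fun s => ∑ i : Fin n, epsUpTo P (i:ℕ) (hmt P i f) s from rfl,
      bd_sum]
  have hH : ∀ i : Fin n, epsUpTo P (i:ℕ) (hmt P i (bigD f)) s
      = ∑ j : Fin n, epsUpTo P (i:ℕ) (hmt P i (bd j f)) s := by
    intro i
    rw [show bigD f = fun s => ∑ j : Fin n, bd j f s from rfl, hmt_sum, epsUpTo_sum]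
  show (∑ j : Fin n, bd j (bigH P f) s) + (∑ i : Fin n, epsUpTo P (i:ℕ) (hmt P i (bigD f)) s) = _
  simp_rw [hD, hH]
  rw [Finset.sum_comm, ← Finset.sum_add_distrib]
  have key : ∀ i : Fin n,
      (∑ j : Fin n, bd j (epsUpTo P (i:ℕ) (hmt P i f)) s)
        + (∑ j : Fin n, epsUpTo P (i:ℕ) (hmt P i (bd j f)) s)
      = epsUpTo P (i:ℕ) f s - epsUpTo P ((i:ℕ)+1) f s := by
    intro i
    rw [← Finset.sum_add_distrib]
    rw [Finset.sum_eq_single i]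
    · rw [show bd i (epsUpTo P (i:ℕ) (hmt P i f)) = epsUpTo P (i:ℕ) (bd i (hmt P i f))
        from bd_epsUpTo_comm P i (i:ℕ) le_rfl _]
      rw [← Pi.add_apply, ← epsUpTo_add, homotopy_self, epsUpTo_sub,
        ← epsUpTo_succ_fin, Pi.sub_apply]
    · intro j _ hji
      have hne : i ≠ j := Ne.symm hji
      rcases lt_or_gt_of_ne hji with h | h
      · have h1 : bd j (epsUpTo P (i:ℕ) (hmt P i f)) = 0 :=
          bd_epsUpTo_zero P j _ h _
        have h2 : hmt P i (bd j f) = - (bd j (hmt P i f)) :=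
          eq_neg_of_add_eq_zero_right (bd_hmt_anti P hne f)
        rw [h1, h2, epsUpTo_neg,
          show epsUpTo P (i:ℕ) (bd j (hmt P i f)) = 0 from epsUpTo_bd_zero P j _ h _]
        simp
      · rw [show bd j (epsUpTo P (i:ℕ) (hmt P i f)) = epsUpTo P (i:ℕ) (bd j (hmt P i f))
          from bd_epsUpTo_comm P j _ (le_of_lt h) _]
        rw [← Pi.add_apply, ← epsUpTo_add, bd_hmt_anti P hne f, epsUpTo_zero]
        simp
    · intro hmem
      exact absurd (Finset.mem_univ i) hmem
  simp_rw [key]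
  rw [Fin.sum_univ_eq_sum_range (fun m => epsUpTo P m f s - epsUpTo P (m+1) f s) n,
    Finset.sum_range_sub' (fun m => epsUpTo P m f s) n]
  rfl

end Aux6
section Aux7
variable {n : ℕ} {A : Type*} [Ring A] (P : Fin n → A)

lemma bigD_bigD (f : Fam n A) : bigD (bigD f) = 0 := by
  funext s
  show ∑ j : Fin n, bd j (bigD f) s = 0
  have h1 : ∀ j : Fin n, bd j (bigD f) s = ∑ i : Fin n, bd j (bd i f) s := by
    intro j
    rw [show bigD f = fun s => ∑ i : Fin n, bd i f s from rfl, bd_sum]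
  simp_rw [h1]
  rw [← Fintype.sum_prod_type']
  apply Finset.sum_ninvolution (fun p => (p.2, p.1))
  · intro p
    show bd p.1 (bd p.2 f) s + bd p.2 (bd p.1 f) s = 0
    rcases eq_or_ne p.1 p.2 with h | h
    · rw [h, show bd p.2 (bd p.2 f) = 0 from bd_bd_self p.2 f]
      simp
    · simpa using congrFun (bd_bd_anti h f) s
  · intro p hp
    show (p.2, p.1) ≠ p
    intro he
    have h1 : p.1 = p.2 := (congrArg Prod.fst he).symm
    apply hp
    show bd p.1 (bd p.2 f) s = 0
    rw [h1, show bd p.2 (bd p.2 f) = 0 from bd_bd_self p.2 f]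
    rfl
  · intro p; exact Finset.mem_univ _
  · intro p; rfl

lemma degS_eq_one {s : Fin n → SignType} (h : ∀ k, s k ≠ 0) : degS s = 1 := by
  unfold degS
  rw [Finset.filter_false_of_mem (fun k _ => h k), Finset.card_empty]

lemma degS_update {s : Fin n → SignType} {i : Fin n} (hi : s i ≠ 0) :
    degS (Function.update s i 0) = degS s + 1 := by
  unfold degS
  have hset : (Finset.univ.filter fun k => Function.update s i 0 k = 0)
      = insert i (Finset.univ.filter fun k => s k = 0) := by
    ext k
    by_cases hk : k = i
    · subst hk; simp
    · simp [Function.update_of_ne hk, hk]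
  rw [hset, Finset.card_insert_of_notMem (by simp [hi])]
  omega

lemma bigD_of_deg_one {f : Fam n A} (hf : ∀ s, degS s ≠ 1 → f s = 0) :
    bigD f = 0 := by
  funext s
  show ∑ j : Fin n, bd j f s = 0
  apply Finset.sum_eq_zero
  intro j _
  by_cases hj : s j = 0
  · simp [bd, hj]
  · rw [bd_apply_ne hj, hf _ (by rw [degS_update hj]; unfold degS; omega), smul_zero]

lemma epsUpTo_vanish (m : ℕ) (g : Fam n A) (s : Fin n → SignType)
    (hg : ∀ t : Fin n → SignType, (∀ k : Fin n, (k:ℕ) < m → t k ≠ 0) →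
      (∀ k : Fin n, m ≤ (k:ℕ) → t k = s k) → g t = 0) :
    epsUpTo P m g s = 0 := by
  induction m generalizing g with
  | zero => exact hg s (by omega) (fun k _ => rfl)
  | succ m ih =>
      simp only [epsUpTo]
      split
      · rename_i h
        apply ih
        intro t ht1 ht2
        by_cases htm : t ⟨m, h⟩ = 0
        · simp [eps, htm]
        · rw [eps_apply_ne P htm]
          have key : ∀ σ : SignType, σ ≠ 0 → g (Function.update t ⟨m, h⟩ σ) = 0 := by
            intro σ hσ
            apply hg
            · intro k hk
              by_cases hkm : k = ⟨m, h⟩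
              · subst hkm; simpa using hσ
              · rw [Function.update_of_ne hkm]
                exact ht1 k (by
                  have : (k:ℕ) ≠ m := fun hh => hkm (Fin.ext hh)
                  omega)
            · intro k hk
              have hkm : k ≠ ⟨m, h⟩ := fun hh => by
                have : (k:ℕ) = m := by rw [hh]
                omega
              rw [Function.update_of_ne hkm]
              exact ht2 k (by omega)
          rw [key 1 (by decide), key (-1) (by decide)]
          simp
      · rename_i h
        apply ih
        intro t ht1 ht2
        apply hg
        · intro k hk
          exact ht1 k (by have := k.isLt; omega)
        · intro k hk
          have := k.isLt; omega

lemma epsUpTo_apply_eq_zero (m : ℕ) (g : Fam n A) (s : Fin n → SignType)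
    (k : Fin n) (hk : (k:ℕ) < m) (hs : s k = 0) :
    epsUpTo P m g s = 0 := by
  induction m generalizing g with
  | zero => omega
  | succ m ih =>
      by_cases hkm : (k:ℕ) < m
      · simp only [epsUpTo]
        split
        · exact ih _ hkm
        · exact ih _ hkm
      · have hm : (k:ℕ) = m := by omega
        have h : m < n := hm ▸ k.isLt
        simp only [epsUpTo]
        rw [dif_pos h]
        apply epsUpTo_vanish
        intro t _ ht2
        have hkf : (⟨m, h⟩ : Fin n) = k := Fin.ext (show m = (k:ℕ) by omega)
        have : t ⟨m, h⟩ = 0 := by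
          rw [ht2 ⟨m, h⟩ (by simp), hkf, hs]
        simp [eps, this]

end Aux7
section Aux8
variable {n : ℕ} {A : Type*} [Ring A] (P : Fin n → A)

lemma tup_update (γ : Fin n → Bool) (i : Fin n) (b : Bool) :
    (fun j => if Function.update γ i b j then (1 : SignType) else -1)
      = Function.update (fun j => if γ j then (1 : SignType) else -1) i
          (if b then 1 else -1) := by
  funext k
  by_cases hk : k = i
  · subst hk; simp
  · simp [Function.update_of_ne hk]

lemma coeff_update (γ : Fin n → Bool) (i : Fin n) :
    (∏ j, (if Function.update γ i (!γ i) j then (1:ℤ) else -1))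
      = - ∏ j, (if γ j then (1:ℤ) else -1) := by
  have h1 : (fun j => if Function.update γ i (!γ i) j then (1:ℤ) else -1)
      = Function.update (fun j => if γ j then (1:ℤ) else -1) i (if !γ i then 1 else -1) := by
    funext k
    by_cases hk : k = i
    · subst hk; simp
    · simp [Function.update_of_ne hk]
  rw [h1, Finset.prod_update_of_mem (Finset.mem_univ i),
    Finset.prod_eq_mul_prod_sdiff_singleton_of_mem (Finset.mem_univ i)
      (fun j => if γ j then (1:ℤ) else -1), ← neg_mul]
  congr 1
  cases hb : γ i <;> simp

lemma dHat_bigD (f : Fam n A) : dHat (bigD f) = 0 := by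
  unfold dHat
  have h1 : ∀ γ : Fin n → Bool, bigD f (fun j => if γ j then 1 else -1)
      = ∑ i : Fin n, bd i f (fun j => if γ j then 1 else -1) := fun _ => rfl
  simp_rw [h1, Finset.smul_sum]
  have conv1 : (∑ p : (Fin n → Bool) × Fin n,
        (∏ j, (if p.1 j then (1:ℤ) else -1)) • bd p.2 f (fun j => if p.1 j then 1 else -1))
      = ∑ γ : Fin n → Bool, ∑ i : Fin n,
          (∏ j, (if γ j then (1:ℤ) else -1)) • bd i f (fun j => if γ j then 1 else -1) :=
    Fintype.sum_prod_type _
  rw [← conv1]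
  apply Finset.sum_ninvolution (fun p => (Function.update p.1 p.2 (!p.1 p.2), p.2))
  · intro p
    obtain ⟨γ, i⟩ := p
    show ((∏ j, (if γ j then (1:ℤ) else -1)) • bd i f (fun j => if γ j then 1 else -1))
      + ((∏ j, (if Function.update γ i (!γ i) j then (1:ℤ) else -1)) •
          bd i f (fun j => if Function.update γ i (!γ i) j then 1 else -1)) = 0
    have ht : (fun j => if γ j then (1:SignType) else -1) i ≠ 0 := by
      show (if γ i then (1:SignType) else -1) ≠ 0
      cases hb : γ i <;> simp
    have ht' : (fun j => if Function.update γ i (!γ i) j then (1:SignType) else -1) i ≠ 0 := by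
      show (if Function.update γ i (!γ i) i then (1:SignType) else -1) ≠ 0
      rw [Function.update_self]
      cases hb : γ i <;> simp
    rw [coeff_update, bd_apply_ne ht, bd_apply_ne ht', tup_update]
    rw [zcount_update_of_not_lt _ (lt_irrefl i), Function.update_idem]
    module
  · intro p _
    have : Function.update p.1 p.2 (!p.1 p.2) ≠ p.1 := by
      intro he
      have := congrFun he p.2
      rw [Function.update_self] at this
      exact (Bool.not_ne_self _) this
    simp [Prod.ext_iff, this]
  · intro p; exact Finset.mem_univ _
  · intro p
    obtain ⟨γ, i⟩ := p
    simp only [Function.update_self, Bool.not_not, Prod.mk.injEq]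
    constructor
    · rw [Function.update_idem, Function.update_eq_self]
    · trivial

end Aux8
section Aux9
variable {n : ℕ} {A : Type*} [Ring A] (P : Fin n → A)

noncomputable def sProd (s : Fin n → SignType) (m : ℕ) : ℤ :=
  ∏ i ∈ Finset.range m, (if h : i < n then ((s ⟨i, h⟩ : ℤ)) else 1)

noncomputable def cProd (γ : Fin n → Bool) (m : ℕ) : ℤ :=
  ∏ i ∈ Finset.range m, (if h : i < n then (if γ ⟨i, h⟩ then 1 else -1) else 1)

noncomputable def pProd (s : Fin n → SignType) (m : ℕ) : A :=
  ((List.range m).map (fun i => if h : i < n then Psgn P ⟨i, h⟩ (s ⟨i, h⟩) else 1)).prod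

def mix (m : ℕ) (γ : Fin n → Bool) (s : Fin n → SignType) : Fin n → SignType :=
  fun k => if (k : ℕ) < m then (if γ k then 1 else -1) else s k

noncomputable def Gm (n m : ℕ) : Finset (Fin n → Bool) :=
  Finset.univ.filter (fun γ => ∀ k : Fin n, m ≤ (k : ℕ) → γ k = true)

lemma sProd_succ (s : Fin n → SignType) (m : ℕ) (h : m < n) :
    sProd s (m + 1) = sProd s m * ((s ⟨m, h⟩ : ℤ)) := by
  rw [sProd, Finset.prod_range_succ, dif_pos h]; rfl

lemma cProd_succ (γ : Fin n → Bool) (m : ℕ) (h : m < n) :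
    cProd γ (m + 1) = cProd γ m * (if γ ⟨m, h⟩ then 1 else -1) := by
  rw [cProd, Finset.prod_range_succ, dif_pos h]; rfl

lemma pProd_succ (s : Fin n → SignType) (m : ℕ) (h : m < n) :
    pProd P s (m + 1) = pProd P s m * Psgn P ⟨m, h⟩ (s ⟨m, h⟩) := by
  rw [pProd, List.range_succ, List.map_append, List.prod_append]
  simp only [List.map_cons, List.map_nil, List.prod_cons, List.prod_nil, mul_one, dif_pos h]
  rfl

lemma cProd_congr {γ γ' : Fin n → Bool} (m : ℕ)
    (h : ∀ k : Fin n, (k : ℕ) < m → γ k = γ' k) : cProd γ m = cProd γ' m := by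
  unfold cProd
  apply Finset.prod_congr rfl
  intro x hx
  rw [Finset.mem_range] at hx
  by_cases hxn : x < n
  · rw [dif_pos hxn, dif_pos hxn, h ⟨x, hxn⟩ hx]
  · rw [dif_neg hxn, dif_neg hxn]

lemma mix_congr {γ γ' : Fin n → Bool} (m : ℕ) (s : Fin n → SignType)
    (h : ∀ k : Fin n, (k : ℕ) < m → γ k = γ' k) : mix m γ s = mix m γ' s := by
  funext k
  unfold mix
  by_cases hk : (k : ℕ) < m
  · rw [if_pos hk, if_pos hk, h k hk]
  · rw [if_neg hk, if_neg hk]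

lemma mix_update (m : ℕ) (h : m < n) (γ : Fin n → Bool) (s : Fin n → SignType) (b : Bool) :
    Function.update (mix m γ s) ⟨m, h⟩ (if b then 1 else -1)
      = mix (m + 1) (Function.update γ ⟨m, h⟩ b) s := by
  funext k
  by_cases hk : k = ⟨m, h⟩
  · rw [hk, Function.update_self]
    have h2 : mix (m+1) (Function.update γ ⟨m, h⟩ b) s ⟨m, h⟩
        = if Function.update γ ⟨m, h⟩ b ⟨m, h⟩ then 1 else -1 := by
      unfold mix
      exact if_pos (show m < m + 1 by omega)
    rw [h2, Function.update_self]
  · rw [Function.update_of_ne hk]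
    have hkm : (k : ℕ) ≠ m := fun he => hk (Fin.ext he)
    show mix m γ s k = mix (m+1) (Function.update γ ⟨m, h⟩ b) s k
    unfold mix
    rw [Function.update_of_ne hk]
    by_cases h2 : (k : ℕ) < m
    · rw [if_pos h2, if_pos (show (k:ℕ) < m + 1 by omega)]
    · rw [if_neg h2, if_neg (show ¬ (k:ℕ) < m + 1 by omega)]

lemma Gm_zero : Gm n 0 = {fun _ => true} := by
  ext γ
  simp only [Gm, Finset.mem_filter, Finset.mem_univ, true_and, Finset.mem_singleton]
  constructor
  · intro h; funext k; exact h k (by omega)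
  · intro h k _; rw [h]

lemma Gm_univ : Gm n n = Finset.univ := by
  ext γ
  simp only [Gm, Finset.mem_filter, Finset.mem_univ, true_and, iff_true]
  intro k hk
  exact absurd k.isLt (by omega)

lemma mix_zero (γ : Fin n → Bool) (s : Fin n → SignType) : mix 0 γ s = s := by
  funext k; simp [mix]

lemma epsUpTo_formula : ∀ (m : ℕ), m ≤ n → ∀ (g : Fam n A) (s : Fin n → SignType),
    (∀ k : Fin n, (k : ℕ) < m → s k ≠ 0) →
    epsUpTo P m g s
      = sProd s m • (pProd P s m * ∑ γ ∈ Gm n m, cProd γ m • g (mix m γ s)) := by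
  intro m
  induction m with
  | zero =>
      intro _ g s _
      rw [Gm_zero, Finset.sum_singleton, mix_zero]
      show g s = (1:ℤ) • ((1:A) * ((1:ℤ) • g s))
      simp
  | succ m ih =>
      intro hm g s hs
      have h : m < n := by omega
      have hsm : s ⟨m, h⟩ ≠ 0 := hs ⟨m, h⟩ (show m < m + 1 by omega)
      simp only [epsUpTo]
      rw [dif_pos h]
      rw [ih (by omega) _ s (fun k hk => hs k (by omega))]
      have step : ∀ γ ∈ Gm n m, cProd γ m • (eps P ⟨m, h⟩ g) (mix m γ s)
          = cProd γ m • (((s ⟨m, h⟩ : ℤ)) • (Psgn P ⟨m, h⟩ (s ⟨m, h⟩) *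
              (g (mix (m+1) γ s) - g (mix (m+1) (Function.update γ ⟨m, h⟩ false) s)))) := by
        intro γ hγ
        have hγm : γ ⟨m, h⟩ = true := by
          simp only [Gm, Finset.mem_filter] at hγ
          exact hγ.2 ⟨m, h⟩ (Nat.le_refl m)
        have hmix : (mix m γ s) ⟨m, h⟩ = s ⟨m, h⟩ := by
          show (if (m : ℕ) < m then _ else s ⟨m, h⟩) = s ⟨m, h⟩
          rw [if_neg (lt_irrefl m)]
        have u1 : Function.update (mix m γ s) ⟨m, h⟩ (1 : SignType) = mix (m+1) γ s := by
          have := mix_update m h γ s true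
          simpa [show Function.update γ ⟨m, h⟩ true = γ by
            rw [← hγm, Function.update_eq_self]] using this
        have u2 : Function.update (mix m γ s) ⟨m, h⟩ (-1 : SignType)
            = mix (m+1) (Function.update γ ⟨m, h⟩ false) s := by
          have := mix_update m h γ s false
          simpa using this
        rw [eps_apply_ne P (by rw [hmix]; exact hsm), hmix, u1, u2]
      rw [Finset.sum_congr rfl step]
      have hsplit : ∑ γ ∈ Gm n (m+1), cProd γ (m+1) • g (mix (m+1) γ s)
          = ∑ γ ∈ Gm n m, (cProd γ m • g (mix (m+1) γ s)
              - cProd γ m • g (mix (m+1) (Function.update γ ⟨m, h⟩ false) s)) := by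
        rw [← Finset.sum_filter_add_sum_filter_not (Gm n (m+1)) (fun γ => γ ⟨m, h⟩ = true)]
        have e1 : (Gm n (m+1)).filter (fun γ => γ ⟨m, h⟩ = true) = Gm n m := by
          ext γ
          simp only [Gm, Finset.mem_filter, Finset.mem_univ, true_and]
          constructor
          · rintro ⟨h1, h2⟩ k hk
            by_cases hkm : (k : ℕ) = m
            · rwa [show k = ⟨m, h⟩ from Fin.ext hkm]
            · exact h1 k (by omega)
          · intro h1
            exact ⟨fun k hk => h1 k (by omega), h1 ⟨m, h⟩ (Nat.le_refl m)⟩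
        have e2 : ∑ γ ∈ (Gm n (m+1)).filter (fun γ => ¬ γ ⟨m, h⟩ = true),
              cProd γ (m+1) • g (mix (m+1) γ s)
            = ∑ γ ∈ Gm n m, (- cProd γ m) • g (mix (m+1) (Function.update γ ⟨m, h⟩ false) s) := by
          apply Finset.sum_nbij' (i := fun γ => Function.update γ ⟨m, h⟩ true)
            (j := fun γ => Function.update γ ⟨m, h⟩ false)
          · intro γ hγ
            simp only [Gm, Finset.mem_filter, Finset.mem_univ, true_and] at hγ ⊢
            intro k hk
            by_cases hkm : k = ⟨m, h⟩
            · rw [hkm, Function.update_self]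
            · rw [Function.update_of_ne hkm]
              refine hγ.1 k ?_
              have : (k:ℕ) ≠ m := fun he => hkm (Fin.ext he)
              omega
          · intro γ hγ
            simp only [Gm, Finset.mem_filter, Finset.mem_univ, true_and] at hγ ⊢
            constructor
            · intro k hk
              have hkm : k ≠ ⟨m, h⟩ := by
                intro he
                rw [he] at hk
                simp at hk
              rw [Function.update_of_ne hkm]
              exact hγ k (by omega)
            · simp
          · intro γ hγ
            simp only [Gm, Finset.mem_filter, Finset.mem_univ, true_and] at hγ
            have hγf : γ ⟨m, h⟩ = false := by simpa using hγ.2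
            funext k
            by_cases hkm : k = ⟨m, h⟩
            · rw [hkm, Function.update_idem, Function.update_self, hγf]
            · rw [Function.update_idem, Function.update_of_ne hkm]
          · intro γ hγ
            simp only [Gm, Finset.mem_filter, Finset.mem_univ, true_and] at hγ
            funext k
            by_cases hkm : k = ⟨m, h⟩
            · rw [hkm, Function.update_idem, Function.update_self,
                hγ ⟨m, h⟩ (Nat.le_refl m)]
            · rw [Function.update_idem, Function.update_of_ne hkm]
          · intro γ hγ
            simp only [Gm, Finset.mem_filter, Finset.mem_univ, true_and] at hγ
            have hγf : γ ⟨m, h⟩ = false := by simpa using hγ.2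
            have hcc : cProd (Function.update γ ⟨m, h⟩ true) m = cProd γ m := by
              apply cProd_congr
              intro k hk
              apply Function.update_of_ne
              intro he
              rw [he] at hk
              simp at hk
            have hc : cProd γ (m+1) = - cProd (Function.update γ ⟨m, h⟩ true) m := by
              rw [cProd_succ _ _ h, hγf, if_neg (by simp), hcc]
              ring
            have hmix2 : mix (m+1) (Function.update (Function.update γ ⟨m, h⟩ true) ⟨m, h⟩ false) s
                = mix (m+1) γ s := by
              rw [Function.update_idem]
              apply mix_congr
              intro k hk
              by_cases hkm : k = ⟨m, h⟩
              · rw [hkm, Function.update_self, hγf]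
              · rw [Function.update_of_ne hkm]
            rw [hc, hmix2]
        rw [e1, e2]
        have e3 : ∀ γ ∈ Gm n m, cProd γ (m+1) • g (mix (m+1) γ s)
            = cProd γ m • g (mix (m+1) γ s) := by
          intro γ hγ
          simp only [Gm, Finset.mem_filter, Finset.mem_univ, true_and] at hγ
          rw [cProd_succ _ _ h, hγ ⟨m, h⟩ (Nat.le_refl m), if_pos rfl, mul_one]
        rw [Finset.sum_congr rfl e3, ← Finset.sum_add_distrib]
        apply Finset.sum_congr rfl
        intro γ _
        rw [neg_smul, sub_eq_add_neg]
      rw [hsplit, sProd_succ _ _ h, pProd_succ P _ _ h]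
      simp only [smul_smul, smul_sub, mul_sub, mul_smul_comm, mul_assoc, Finset.mul_sum,
        Finset.smul_sum, Finset.sum_sub_distrib]
      congr 1 <;> exact Finset.sum_congr rfl fun γ _ => by module

end Aux9
section Aux10
variable {n : ℕ} {A : Type*} [Ring A] (P : Fin n → A)

lemma sProd_n (s : Fin n → SignType) : sProd s n = ∏ j : Fin n, ((s j : ℤ)) := by
  rw [sProd, ← Fin.prod_univ_eq_prod_range (fun i => if h : i < n then ((s ⟨i, h⟩ : ℤ)) else 1) n]
  apply Finset.prod_congr rfl
  intro j _
  rw [dif_pos j.isLt]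

lemma cProd_n (γ : Fin n → Bool) : cProd γ n = ∏ j : Fin n, (if γ j then (1:ℤ) else -1) := by
  rw [cProd, ← Fin.prod_univ_eq_prod_range
    (fun i => if h : i < n then (if γ ⟨i, h⟩ then (1:ℤ) else -1) else 1) n]
  apply Finset.prod_congr rfl
  intro j _
  rw [dif_pos j.isLt]

lemma pProd_n (s : Fin n → SignType) :
    pProd P s n = ((List.finRange n).map (fun j => Psgn P j (s j))).prod := by
  rw [pProd, ← (show (List.finRange n).map (fun i : Fin n => (i : ℕ)) = List.range n from
    List.ext_getElem (by simp) (by simp)), List.map_map]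
  congr 1
  apply List.map_congr_left
  intro j _
  show (if h : (j:ℕ) < n then Psgn P ⟨(j:ℕ), h⟩ (s ⟨(j:ℕ), h⟩) else 1) = Psgn P j (s j)
  rw [dif_pos j.isLt]

lemma mix_n (γ : Fin n → Bool) (s : Fin n → SignType) :
    mix n γ s = fun j => if γ j then 1 else -1 := by
  funext k
  unfold mix
  rw [if_pos k.isLt]

lemma hmt_zero (i : Fin n) : hmt P i (0 : Fam n A) = 0 := by
  funext s
  by_cases h : s i = 0 <;> simp [hmt, h]

lemma bigH_zero : bigH P (0 : Fam n A) = 0 := by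
  funext s
  show ∑ i : Fin n, epsUpTo P (i : ℕ) (hmt P i 0) s = 0
  apply Finset.sum_eq_zero
  intro i _
  rw [hmt_zero, epsUpTo_zero]
  rfl

lemma hHat_dHat (f : Fam n A) : hHat P (dHat f) = epsUpTo P n f := by
  funext s
  by_cases hall : ∀ j, s j ≠ 0
  · rw [epsUpTo_formula P n le_rfl f s (fun k _ => hall k), Gm_univ]
    show (if ∀ j, s j ≠ 0 then (∏ j, ((s j : ℤ))) •
        (((List.finRange n).map (fun j => Psgn P j (s j))).prod * dHat f) else 0) = _
    rw [if_pos hall, ← sProd_n, ← pProd_n]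
    congr 2
    unfold dHat
    apply Finset.sum_congr rfl
    intro γ _
    rw [cProd_n, mix_n]
  · have h0 : hHat P (dHat f) s = 0 := by
      show (if ∀ j, s j ≠ 0 then _ else 0) = 0
      rw [if_neg hall]
    rw [h0]
    push_neg at hall
    obtain ⟨j, hj⟩ := hall
    rw [epsUpTo_apply_eq_zero P n f s j j.isLt (by simpa using hj)]

end Aux10
section Aux11
variable {A : Type*} [Ring A]

lemma sum_prod_bool : ∀ (m : ℕ) (R : Fin m → Bool → A),
    (∑ γ : Fin m → Bool, ((List.finRange m).map (fun j => R j (γ j))).prod)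
      = ((List.finRange m).map (fun j => R j true + R j false)).prod := by
  intro m
  induction m with
  | zero =>
      intro R
      simp
  | succ m ih =>
      intro R
      have e1 := Equiv.sum_comp (Fin.consEquiv (fun _ : Fin (m+1) => Bool))
        (fun γ : Fin (m+1) → Bool => ((List.finRange (m+1)).map (fun j => R j (γ j))).prod)
      rw [← e1, Fintype.sum_prod_type]
      have e2 : ∀ (b : Bool) (γ' : Fin m → Bool),
          ((List.finRange (m+1)).map (fun j =>
            R j ((Fin.consEquiv (fun _ : Fin (m+1) => Bool)) (b, γ') j))).prod
          = R 0 b * ((List.finRange m).map (fun j => R j.succ (γ' j))).prod := by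
        intro b γ'
        rw [List.finRange_succ, List.map_cons, List.prod_cons, List.map_map]
        simp only [Fin.consEquiv_apply, Fin.cons_zero]
        have hcomp : ((fun j : Fin (m+1) => R j (Fin.cons (α := fun _ => Bool) b γ' j)) ∘ Fin.succ)
            = (fun j : Fin m => R j.succ (γ' j)) := by
          funext j
          simp [Function.comp, Fin.cons_succ]
        rw [hcomp]
      simp_rw [e2]
      simp_rw [← Finset.mul_sum]
      rw [← Finset.sum_mul, ih (fun j b => R j.succ b), Fintype.sum_bool]
      rw [List.finRange_succ, List.map_cons, List.prod_cons, List.map_map]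
      rfl

variable {n : ℕ} (P : Fin n → A)

lemma dHat_hHat (a : A) : dHat (hHat P a) = a := by
  unfold dHat
  have h1 : ∀ γ : Fin n → Bool, hHat P a (fun j => if γ j then 1 else -1)
      = (∏ j, (if γ j then (1:ℤ) else -1)) •
        (((List.finRange n).map (fun j =>
          Psgn P j (if γ j then 1 else -1))).prod * a) := by
    intro γ
    show (if ∀ j, (if γ j then (1:SignType) else -1) ≠ 0 then _ else 0) = _
    rw [if_pos (fun j => by cases hb : γ j <;> simp [hb])]
    congr 1
    apply Finset.prod_congr rfl
    intro j _
    cases hb : γ j <;> simp [hb]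
  simp_rw [h1, smul_smul]
  have h2 : ∀ γ : Fin n → Bool,
      ((∏ j, (if γ j then (1:ℤ) else -1)) * (∏ j, (if γ j then (1:ℤ) else -1))) = 1 := by
    intro γ
    rw [← Finset.prod_mul_distrib]
    apply Finset.prod_eq_one
    intro j _
    cases hb : γ j <;> norm_num
  simp_rw [h2, one_smul, ← Finset.sum_mul]
  have h3 := sum_prod_bool n (fun j b => Psgn P j (if b then 1 else -1))
  rw [h3]
  have h4 : ((List.finRange n).map (fun j =>
      Psgn P j (if true then 1 else -1) + Psgn P j (if false then (1:SignType) else -1))).prod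
      = 1 := by
    have : ∀ j : Fin n, Psgn P j (if true then 1 else -1)
        + Psgn P j (if false then (1:SignType) else -1) = 1 := by
      intro j
      show P j + (1 - P j) = 1
      abel
    rw [List.map_congr_left (fun j _ => this j)]
    simp
  rw [h4, one_mul]

end Aux11
theorem cube_complex_exact {n : ℕ} {A : Type*} [Ring A] (P : Fin n → A)
    (hidem : ∀ i, P i * P i = P i)
    (hcomm : ∀ i j, P i * P j = P j * P i) :
    -- N^• is a complex
    (∀ f : Fam n A, bigD (bigD f) = 0) ∧
    (∀ f : Fam n A, dHat (bigD f) = 0) ∧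
    -- contracting homotopy in degrees ≥ 2
    (∀ p : ℕ, 2 ≤ p → ∀ f : Fam n A, (∀ s, degS s ≠ p → f s = 0) →
      bigD (bigH P f) + bigH P (bigD f) = f) ∧
    -- ∂H + Ĥ∂̂ = 1 on N^1
    (∀ f : Fam n A, (∀ s, degS s ≠ 1 → f s = 0) →
      bigD (bigH P f) + hHat P (dHat f) = f) ∧
    -- ∂̂Ĥ = 1 on N^0
    (∀ a : A, dHat (hHat P a) = a) := by
  refine ⟨fun f => bigD_bigD f, fun f => dHat_bigD f, ?_, ?_, fun a => dHat_hHat P a⟩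
  · intro p hp f hf
    rw [master P f]
    have hE : epsUpTo P n f = 0 := by
      funext s
      apply epsUpTo_vanish
      intro t ht1 _
      apply hf
      rw [degS_eq_one (fun k => ht1 k k.isLt)]
      omega
    rw [hE, sub_zero]
  · intro f hf
    rw [hHat_dHat P f]
    have h2 := master P f
    rw [bigD_of_deg_one hf, bigH_zero, add_zero] at h2
    rw [h2, sub_add_cancel]
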